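/- arXiv:2506.19274 — 4 statements merged into one kernel-verified Lean document; each statement's English description precedes it below -/
import Mathlib

section
/- Let X be a Banach space over ℝ or ℂ, let L : X →L[𝕜] X be a continuous linear operator, let P : X →L[𝕜] X be a continuous linear operator, and set Q = id − P. Then for every t ≥ 0, Dyson's identity holds: exp(t•L) = exp(t•(Q ∘ L)) + ∫_0^t exp((t−s)•L) ∘ P ∘ L ∘ exp(s•(Q ∘ L)) ds, where the integral is the Bochner integral of the (continuous) operator-valued integrand. -/
open NormedSpace


/-- **Dyson's identity.** For continuous linear operators `L`, `P` on a Banach space `X`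
over `ℝ` or `ℂ`, with `Q = id - P`, and every `t ≥ 0`:
`exp(t•L) = exp(t•(Q∘L)) + ∫_0^t exp((t−s)•L) ∘ P ∘ L ∘ exp(s•(Q∘L)) ds`. -/
theorem dyson_identity {𝕜 : Type*} [RCLike 𝕜] {X : Type*} [NormedAddCommGroup X]
    [NormedSpace 𝕜 X] [NormedSpace ℝ X] [IsScalarTower ℝ 𝕜 X] [SMulCommClass 𝕜 ℝ X]
    [CompleteSpace X]
    (L P : X →L[𝕜] X) (Q : X →L[𝕜] X)
    (hQ : Q = ContinuousLinearMap.id 𝕜 X - P)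
    (t : ℝ) (ht : 0 ≤ t) :
    NormedSpace.exp (t • L) =
      NormedSpace.exp (t • (Q.comp L)) +
        ∫ s in (0:ℝ)..t,
          (NormedSpace.exp ((t - s) • L)).comp
            (P.comp (L.comp (NormedSpace.exp (s • (Q.comp L))))) := by
  letI instA : Algebra ℝ (X →L[𝕜] X) :=
    Algebra.ofModule (fun r x y => by ext v; simp [ContinuousLinearMap.smul_comp])
      (fun r x y => by
        ext v
        simp only [ContinuousLinearMap.mul_apply, ContinuousLinearMap.smul_apply,
          ContinuousLinearMap.map_smul_of_tower])
  letI instNA : NormedAlgebra ℝ (X →L[𝕜] X) :=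
    { instA with norm_smul_le := fun r x => _root_.norm_smul_le r x }
  set M : X →L[𝕜] X := Q.comp L with hM
  have hexp : (exp : (X →L[𝕜] X) → (X →L[𝕜] X)) = exp := rfl
  have hML : M = L - P * L := by
    rw [hM, hQ]; ext x; simp [ContinuousLinearMap.sub_comp]
  have hderiv : ∀ s : ℝ, HasDerivAt
      (fun s : ℝ => exp ((t - s) • L) * exp (s • M))
      (-(exp ((t - s) • L) * (P * (L * exp (s • M))))) s := by
    intro s
    have h1 : HasDerivAt (fun s : ℝ => exp ((t - s) • L))
        ((exp ((t - s) • L) * L) * (-1)) s := by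
      have hu : HasDerivAt (fun s : ℝ => t - s) (-1) s := by
        simpa using (hasDerivAt_id s).const_sub t
      have := (hasDerivAt_exp_smul_const (𝕂 := ℝ) L (t - s)).scomp s hu
      simpa [smul_smul, mul_comm, Function.comp_def] using this
    have h2 : HasDerivAt (fun s : ℝ => exp (s • M))
        (M * exp (s • M)) s := hasDerivAt_exp_smul_const' (𝕂 := ℝ) M s
    refine (h1.mul h2).congr_deriv ?_
    rw [hML]
    noncomm_ring
  have hcont : Continuous (fun s : ℝ =>
      exp ((t - s) • L) * (P * (L * exp (s • M)))) := by
    apply Continuous.mul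
    · exact (continuous_iff_continuousAt.2 fun u => (hasDerivAt_exp_smul_const' (𝕂 := ℝ) L u).continuousAt).comp (continuous_const.sub continuous_id)
    · exact continuous_const.mul (continuous_const.mul
        (continuous_iff_continuousAt.2 fun u => (hasDerivAt_exp_smul_const' (𝕂 := ℝ) M u).continuousAt))
  have hint : IntervalIntegrable (fun s : ℝ =>
      -(exp ((t - s) • L) * (P * (L * exp (s • M))))) MeasureTheory.volume 0 t :=
    hcont.neg.intervalIntegrable _ _
  have hftc := intervalIntegral.integral_eq_sub_of_hasDerivAt
    (f := fun s : ℝ => exp ((t - s) • L) * exp (s • M)) (fun s _ => hderiv s) hint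
  rw [intervalIntegral.integral_neg] at hftc
  simp only [sub_self, zero_smul, exp_zero, one_mul, mul_one, sub_zero] at hftc
  have key : (∫ s in (0:ℝ)..t, exp ((t - s) • L) * (P * (L * exp (s • M))))
      = exp (t • L) - exp (t • M) := by
    have := neg_eq_iff_eq_neg.mp hftc
    rw [this]; abel
  have hcomp : ∀ s : ℝ, (exp ((t - s) • L)).comp (P.comp (L.comp (exp (s • M))))
      = exp ((t - s) • L) * (P * (L * exp (s • M))) := fun s => rfl
  simp only [hexp, hcomp, key]
  abel
end

section
/- Let X be a Banach space over ℝ or ℂ, let L : X →L[𝕜] X and P : X →L[𝕜] X be continuous linear operators, and set Q = id − P. Then for every t ≥ 0, the Mori–Zwanzig decomposition holds as an operator identity: exp(t•L) ∘ L = exp(t•L) ∘ P ∘ L + ∫_0^t exp((t−s)•L) ∘ P ∘ L ∘ exp(s•(Q ∘ L)) ∘ Q ∘ L ds + exp(t•(Q ∘ L)) ∘ Q ∘ L, where the integral is the Bochner integral of the operator-valued integrand. -/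
open NormedSpace

section aux
variable {𝕜 : Type*} [RCLike 𝕜] {X : Type*}
    [NormedAddCommGroup X] [NormedSpace 𝕜 X] [NormedSpace ℝ X]
    [IsScalarTower ℝ 𝕜 X] [SMulCommClass 𝕜 ℝ X] [CompleteSpace X]

set_option maxHeartbeats 1000000 in
theorem mz_duhamel (A B : X →L[𝕜] X) (t : ℝ) :
    exp (t • B) - exp (t • A)
      = ∫ s in (0:ℝ)..t, exp ((t - s) • A) * (B - A) * exp (s • B) := by
  letI : SMulCommClass ℝ (X →L[𝕜] X) (X →L[𝕜] X) :=
    ⟨fun r f g => (ContinuousLinearMap.comp_smul f r g).symm⟩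
  letI : IsScalarTower ℝ (X →L[𝕜] X) (X →L[𝕜] X) :=
    ⟨fun r f g => ContinuousLinearMap.smul_comp r f g⟩
  letI alg : Algebra ℝ (X →L[𝕜] X) := Algebra.ofModule
    (fun r f g => ContinuousLinearMap.smul_comp r f g)
    (fun r f g => (ContinuousLinearMap.comp_smul f r g))
  letI : NormedAlgebra ℝ (X →L[𝕜] X) := { alg with norm_smul_le := _root_.norm_smul_le }
  have hE : (exp : (X →L[𝕜] X) → (X →L[𝕜] X)) = exp := rfl
  rw [hE]
  have key : ∀ s : ℝ, HasDerivAt (fun u : ℝ => exp ((t - u) • A) * exp (u • B))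
      (exp ((t - s) • A) * (B - A) * exp (s • B)) s := by
    intro s
    have h1 : HasDerivAt (fun u : ℝ => exp ((t - u) • A))
        ((-1 : ℝ) • (A * exp ((t - s) • A))) s :=
      (hasDerivAt_exp_smul_const' A (t - s)).scomp s ((hasDerivAt_id s).const_sub t)
    have h2 : HasDerivAt (fun u : ℝ => exp (u • B)) (B * exp (s • B)) s :=
      hasDerivAt_exp_smul_const' B s
    have := h1.mul h2
    refine HasDerivAt.congr_deriv this ?_
    have hc : A * exp ((t - s) • A) = exp ((t - s) • A) * A :=
      (((Commute.refl A).smul_right (t - s)).exp_right)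
    rw [neg_one_smul ℝ, hc, neg_mul, mul_sub, sub_mul, mul_assoc, mul_assoc]
    abel
  have hcont : Continuous fun s : ℝ => exp ((t - s) • A) * (B - A) * exp (s • B) := by
    have hce : Continuous (exp : (X →L[𝕜] X) → _) :=
      continuous_iff_continuousAt.2 fun x => (exp_analytic (𝕂 := 𝕜) x).continuousAt
    fun_prop
  have := intervalIntegral.integral_eq_sub_of_hasDerivAt (f := fun u : ℝ =>
      exp ((t - u) • A) * exp (u • B)) (fun s _ => key s)
      (hcont.intervalIntegrable (μ := MeasureTheory.volume) 0 t)
  rw [this]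
  simp [exp_zero]
end aux


/-- **Mori–Zwanzig decomposition** as an operator identity. For continuous linear operators
`L`, `P` on a Banach space `X` over `ℝ` or `ℂ`, with `Q = id - P`, and every `t ≥ 0`:
`exp(t•L) ∘ L = exp(t•L) ∘ P ∘ L
  + ∫_0^t exp((t−s)•L) ∘ P ∘ L ∘ exp(s•(Q∘L)) ∘ Q ∘ L ds + exp(t•(Q∘L)) ∘ Q ∘ L`. -/
theorem mori_zwanzig_decomposition {𝕜 : Type*} [RCLike 𝕜] {X : Type*}
    [NormedAddCommGroup X] [NormedSpace 𝕜 X] [NormedSpace ℝ X]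
    [IsScalarTower ℝ 𝕜 X] [SMulCommClass 𝕜 ℝ X] [CompleteSpace X]
    (L P : X →L[𝕜] X) (Q : X →L[𝕜] X)
    (hQ : Q = ContinuousLinearMap.id 𝕜 X - P)
    (t : ℝ) (ht : 0 ≤ t) :
    (NormedSpace.exp (t • L)).comp L =
      (NormedSpace.exp (t • L)).comp (P.comp L) +
        (∫ s in (0:ℝ)..t,
          (NormedSpace.exp ((t - s) • L)).comp
            (P.comp (L.comp ((NormedSpace.exp (s • (Q.comp L))).comp
              (Q.comp L))))) +
        (NormedSpace.exp (t • (Q.comp L))).comp (Q.comp L) := by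
  simp only [← ContinuousLinearMap.mul_def]
  have hd := mz_duhamel L (Q * L) t
  have hQL : Q * L - L = -(P * L) := by
    rw [hQ]
    have : (ContinuousLinearMap.id 𝕜 X : X →L[𝕜] X) = 1 := rfl
    rw [this, sub_mul, one_mul]
    abel
  rw [hQL] at hd
  simp only [neg_mul, mul_neg, intervalIntegral.integral_neg] at hd
  have h2 : exp (t • L) = exp (t • (Q * L)) +
      ∫ s in (0:ℝ)..t, exp ((t - s) • L) * (P * L) * exp (s • (Q * L)) := by
    have h3 : exp (t • L) - exp (t • (Q * L)) =
        ∫ s in (0:ℝ)..t, exp ((t - s) • L) * (P * L) * exp (s • (Q * L)) := by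
      rw [← neg_sub, hd, neg_neg]
    rw [← h3]; abel
  have hcont : Continuous fun s : ℝ =>
      exp ((t - s) • L) * (P * L) * exp (s • (Q * L)) := by
    have hce : Continuous (exp : (X →L[𝕜] X) → _) :=
      continuous_iff_continuousAt.2 fun x => (exp_analytic (𝕂 := 𝕜) x).continuousAt
    fun_prop
  have hmul := ((ContinuousLinearMap.mul 𝕜 (X →L[𝕜] X)).flip
    (Q * L)).intervalIntegral_comp_comm (hcont.intervalIntegrable (μ := MeasureTheory.volume) 0 t)
  simp only [ContinuousLinearMap.flip_apply, ContinuousLinearMap.mul_apply'] at hmul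
  have hPQ : P * L + Q * L = L := by
    rw [hQ]
    have h1 : (ContinuousLinearMap.id 𝕜 X : X →L[𝕜] X) = 1 := rfl
    rw [h1, sub_mul, one_mul]
    abel
  have key : exp (t • L) * (Q * L) =
      (∫ s in (0:ℝ)..t, exp ((t - s) • L) * (P * L) * exp (s • (Q * L)) * (Q * L))
      + exp (t • (Q * L)) * (Q * L) := by
    rw [hmul, h2, add_mul, add_comm]
  have hsplit : exp (t • L) * L
      = exp (t • L) * (P * L) + exp (t • L) * (Q * L) := by
    rw [← mul_add, hPQ]
  rw [hsplit, key, ← add_assoc]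
  congr 2
end

section
/- Let X be a Banach space over ℝ or ℂ, let L : X →L[𝕜] X and P : X →L[𝕜] X be continuous linear operators, set Q = id − P, and fix b ∈ X. Then for every t ≥ 0: P (L (exp(t•(Q∘L)) b)) = P (L (exp(t•L) b)) − ∫_0^t P (L (exp((t−s)•L) (P (L (exp(s•(Q∘L)) b))))) ds. -/
open NormedSpace

section Aux

variable {𝕜 : Type*} [RCLike 𝕜] {X : Type*}
    [NormedAddCommGroup X] [NormedSpace 𝕜 X] [NormedSpace ℝ X]
    [IsScalarTower ℝ 𝕜 X] [SMulCommClass 𝕜 ℝ X] [CompleteSpace X]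

set_option linter.unusedSectionVars false

lemma aux_hasDerivAt_comp_ofReal {f : 𝕜 → X} {f' : X} {t : ℝ}
    (hf : HasDerivAt f f' ((t : 𝕜))) :
    HasDerivAt (fun s : ℝ => f ((s : 𝕜))) f' t := by
  have hco := (RCLike.ofRealCLM (K := 𝕜)).hasFDerivAt (x := t)
  have h := (hf.hasFDerivAt.restrictScalars ℝ).comp t hco
  have h2 := h.hasDerivAt
  have h3 : (fun s : ℝ => f ((s : 𝕜))) = f ∘ ⇑(RCLike.ofRealCLM (K := 𝕜)) := rfl
  rw [h3]
  simpa [RCLike.real_smul_eq_coe_smul (K := 𝕜)] using h2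

lemma aux_real_smul (u : ℝ) (B : X →L[𝕜] X) : u • B = ((u : 𝕜)) • B := by
  ext x
  exact RCLike.real_smul_eq_coe_smul (K := 𝕜) u (B x)

lemma aux_hasDerivAt_exp (A : X →L[𝕜] X) (s : ℝ) :
    HasDerivAt (fun u : ℝ => exp (u • A)) (exp (s • A) * A) s := by
  have h := hasDerivAt_exp_smul_const (𝕂 := 𝕜) A ((s : 𝕜))
  have h2 := aux_hasDerivAt_comp_ofReal (X := X →L[𝕜] X) h
  simp only [← aux_real_smul] at h2
  exact h2

lemma aux_restrict {c : ℝ → X →L[𝕜] X} {c' : X →L[𝕜] X} {s : ℝ}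
    (hc : HasDerivAt c c' s) :
    HasDerivAt (fun u => ContinuousLinearMap.restrictScalarsL 𝕜 X X ℝ ℝ (c u))
      (ContinuousLinearMap.restrictScalarsL 𝕜 X X ℝ ℝ c') s := by
  simpa using (hasDerivAt_const s (ContinuousLinearMap.restrictScalarsL 𝕜 X X ℝ ℝ)).clm_apply hc

lemma aux_cont_exp (A : X →L[𝕜] X) : Continuous fun u : ℝ => exp (u • A) :=
  continuous_iff_continuousAt.2 fun s => (aux_hasDerivAt_exp A s).continuousAt

end Aux

set_option linter.unusedVariables false

/-- The projected action of the orthogonal-dynamics semigroup solves a Volterra integral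
equation: for continuous linear operators `L`, `P` on a Banach space `X` over `ℝ` or `ℂ`,
with `Q = id - P` and `b ∈ X`, for every `t ≥ 0`:
`P (L (exp(t•(Q∘L)) b)) = P (L (exp(t•L) b))
  − ∫_0^t P (L (exp((t−s)•L) (P (L (exp(s•(Q∘L)) b))))) ds`. -/
theorem projected_orthogonal_dynamics_volterra {𝕜 : Type*} [RCLike 𝕜] {X : Type*}
    [NormedAddCommGroup X] [NormedSpace 𝕜 X] [NormedSpace ℝ X]
    [IsScalarTower ℝ 𝕜 X] [SMulCommClass 𝕜 ℝ X] [CompleteSpace X]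
    (L P : X →L[𝕜] X) (Q : X →L[𝕜] X)
    (hQ : Q = ContinuousLinearMap.id 𝕜 X - P)
    (b : X) (t : ℝ) (ht : 0 ≤ t) :
    P (L (NormedSpace.exp (t • (Q.comp L)) b)) =
      P (L (NormedSpace.exp (t • L) b)) -
        ∫ s in (0:ℝ)..t,
          P (L (NormedSpace.exp ((t - s) • L)
            (P (L (NormedSpace.exp (s • (Q.comp L)) b))))) := by
  set A : X →L[𝕜] X := Q.comp L with hA
  set g : ℝ → X := fun s => exp ((t - s) • L) (exp (s • A) b) with hg
  set d : ℝ → X := fun s => exp ((t - s) • L) (P (L (exp (s • A) b))) with hd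
  set R := ContinuousLinearMap.restrictScalarsL 𝕜 X X ℝ ℝ with hR
  have hderiv : ∀ s : ℝ, HasDerivAt g (-(d s)) s := by
    intro s
    have hh : HasDerivAt (fun u : ℝ => t - u) (-1 : ℝ) s := by
      simpa using (hasDerivAt_id s).const_sub t
    have h1 : HasDerivAt (fun u : ℝ => exp ((t - u) • L))
        ((-1 : ℝ) • (exp ((t - s) • L) * L)) s := by
      exact HasDerivAt.scomp_of_eq (x := s) (aux_hasDerivAt_exp L (t - s)) hh rfl
    have h2 : HasDerivAt (fun u : ℝ => exp (u • A) b)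
        ((exp (s • A) * A) b) s := by
      have := (aux_restrict (aux_hasDerivAt_exp A s)).clm_apply (hasDerivAt_const s b)
      simpa using this
    have h3 := (aux_restrict h1).clm_apply h2
    have h4 : HasDerivAt g
        ((R ((-1 : ℝ) • (exp ((t - s) • L) * L))) (exp (s • A) b)
          + (R (exp ((t - s) • L))) ((exp (s • A) * A) b)) s := by
      simpa [hg, hR] using h3
    convert h4 using 1
    have hcomm : exp (s • A) * A = A * exp (s • A) := by
      rw [aux_real_smul]
      exact ((Commute.refl A).smul_left ((s : 𝕜))).exp_left
    have hAL : A = L - P.comp L := by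
      rw [hA, hQ]; ext x; simp
    rw [hcomm]
    nth_rewrite 2 [hAL]
    simp [hd, hR, map_sub]
    abel
  have hcont : Continuous d := by
    apply Continuous.clm_apply
    · exact (aux_cont_exp L).comp (continuous_const.sub continuous_id)
    · exact P.continuous.comp <| L.continuous.comp <|
        Continuous.clm_apply (aux_cont_exp A) continuous_const
  have hint : IntervalIntegrable (fun s => -(d s)) MeasureTheory.volume 0 t :=
    (hcont.neg).intervalIntegrable 0 t
  have hftc := intervalIntegral.integral_eq_sub_of_hasDerivAt
    (fun s _ => hderiv s) hint
  have hg0 : g 0 = exp (t • L) b := by simp [hg]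
  have hgt : g t = exp (t • A) b := by simp [hg]
  rw [hg0, hgt, intervalIntegral.integral_neg] at hftc
  have hdyson : exp (t • A) b = exp (t • L) b - ∫ s in (0:ℝ)..t, d s := by
    have h2 := sub_eq_iff_eq_add.mp hftc.symm
    rw [h2]; abel
  have hPL := congrArg (fun x => P (L x)) hdyson
  simp only [map_sub] at hPL
  rw [hPL]
  congr 1
  have hswap := (P.comp L).intervalIntegral_comp_comm (μ := MeasureTheory.volume) (hcont.intervalIntegrable 0 t)
  simp only [ContinuousLinearMap.comp_apply] at hswap
  show P (L (∫ s in (0:ℝ)..t, d s)) = ∫ s in (0:ℝ)..t, P (L (d s))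
  exact hswap.symm
end

section
/- Let H be a complete inner product space over ℝ, let (h_j)_{j ∈ Fin J} be a finite orthonormal family in H, let P : H →L[ℝ] H be the map P x = Σ_{j} ⟨h_j, x⟩ h_j (the orthogonal projection onto the span of the h_j), set Q = id − P, let L : H →L[ℝ] H be a continuous linear operator, and fix b ∈ H. Define, for t ≥ 0, the memory kernels K_j(t) = ⟨h_j, L (exp(t•(Q∘L)) b)⟩, and the data f_l(t) = ⟨h_l, exp(t•L) (L b)⟩ and g_{l j}(t) = ⟨h_l, exp(t•L) (L h_j)⟩. Then for every l ∈ Fin J and every t ≥ 0, the memory kernels satisfy the Volterra system K_l(t) = f_l(t) − Σ_{j ∈ Fin J} ∫_0^t g_{l j}(t−s) · K_j(s) ds. -/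
open scoped RealInnerProductSpace

set_option maxHeartbeats 1000000 in
set_option synthInstance.maxHeartbeats 200000 in

/-- **Volterra system for the Mori–Zwanzig memory kernels.** Let `(h j)` be a finite
orthonormal family in a real Hilbert space `H`, `P` the orthogonal projection onto their
span, `Q = id − P`, `L` a continuous linear operator and `b ∈ H`. With the memory kernels
`K j t = ⟪h j, L (exp(t•(Q∘L)) b)⟫`, and the data `f l t = ⟪h l, exp(t•L) (L b)⟫`,
`g l j t = ⟪h l, exp(t•L) (L (h j))⟫`, for every `l` and every `t ≥ 0`:
`K l t = f l t − Σ_j ∫_0^t g l j (t−s) * K j s ds`. -/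
theorem memory_kernel_volterra {H : Type*} [NormedAddCommGroup H]
    [InnerProductSpace ℝ H] [CompleteSpace H]
    {J : ℕ} (h : Fin J → H) (hh : Orthonormal ℝ h)
    (P : H →L[ℝ] H) (hP : ∀ x, P x = ∑ j, ⟪h j, x⟫ • h j)
    (Q : H →L[ℝ] H) (hQ : Q = ContinuousLinearMap.id ℝ H - P)
    (L : H →L[ℝ] H) (b : H)
    (K f : Fin J → ℝ → ℝ) (g : Fin J → Fin J → ℝ → ℝ)
    (hK : ∀ j t, K j t = ⟪h j, L (NormedSpace.exp (t • (Q.comp L)) b)⟫)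
    (hf : ∀ l t, f l t = ⟪h l, NormedSpace.exp (t • L) (L b)⟫)
    (hg : ∀ l j t, g l j t = ⟪h l, NormedSpace.exp (t • L) (L (h j))⟫) :
    ∀ l : Fin J, ∀ t : ℝ, 0 ≤ t →
      K l t = f l t - ∑ j, ∫ s in (0:ℝ)..t, g l j (t - s) * K j s := by
  intro l t _ht
  let +nondep : NormedAlgebra ℚ (H →L[ℝ] H) := .restrictScalars ℚ ℝ (H →L[ℝ] H)
  set M : H →L[ℝ] H := Q.comp L with hM
  -- continuity helper
  have hcont : ∀ (A : H →L[ℝ] H) (x : H), Continuous fun s : ℝ => NormedSpace.exp (s • A) x := by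
    intro A x
    exact (NormedSpace.exp_continuous.comp (continuous_id.smul continuous_const)).clm_apply
      continuous_const
  -- the integrand of Duhamel
  set F : ℝ → H := fun s => NormedSpace.exp ((t - s) • L) ((P.comp L)
      (NormedSpace.exp (s • M) b)) with hF
  have hFcont : Continuous F := by
    apply Continuous.clm_apply
    · exact NormedSpace.exp_continuous.comp ((continuous_const.sub continuous_id).smul
        continuous_const)
    · exact (P.comp L).continuous.comp (hcont M b)
  -- commuting exp with the generator
  have hcomm : ∀ (A : H →L[ℝ] H) (u : ℝ) (x : H),
      L (NormedSpace.exp (u • L) x) = NormedSpace.exp (u • L) (L x) := by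
    intro A u x
    have hc : Commute (NormedSpace.exp (u • L)) L := ((Commute.refl L).smul_left u).exp_left
    calc L (NormedSpace.exp (u • L) x) = (L * NormedSpace.exp (u • L)) x := rfl
      _ = (NormedSpace.exp (u • L) * L) x := by rw [hc.eq]
      _ = NormedSpace.exp (u • L) (L x) := rfl
  -- the derivative computation
  have key : ∀ s : ℝ, HasDerivAt
      (fun u : ℝ => NormedSpace.exp ((t - u) • L) (NormedSpace.exp (u • M) b))
      (-(F s)) s := by
    intro s
    have hFd : HasDerivAt (fun u : ℝ => NormedSpace.exp ((t - u) • L))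
        (-(NormedSpace.exp ((t - s) • L) * L)) s := by
      have h1 : HasDerivAt (fun v : ℝ => NormedSpace.exp (v • L))
          (NormedSpace.exp ((t - s) • L) * L) (t - s) := hasDerivAt_exp_smul_const L (t - s)
      have h2 : HasDerivAt (fun u : ℝ => t - u) (-1) s := by
        simpa using (hasDerivAt_id s).const_sub t
      have := (h1.scomp s h2 : HasDerivAt _ _ _)
      simpa [neg_one_smul, Function.comp_def] using this
    have hGd : HasDerivAt (fun u : ℝ => NormedSpace.exp (u • M) b)
        ((NormedSpace.exp (s • M) * M) b) s := by
      have h1 : HasDerivAt (fun v : ℝ => NormedSpace.exp (v • M))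
          (NormedSpace.exp (s • M) * M) s := hasDerivAt_exp_smul_const M s
      simpa using h1.clm_apply (hasDerivAt_const s b)
    have hd := hFd.clm_apply hGd
    have hcm : NormedSpace.exp (s • M) * M = M * NormedSpace.exp (s • M) :=
      (((Commute.refl M).smul_left s).exp_left).eq
    rw [hcm] at hd
    have hPL : P.comp L = L - M := by
      rw [hM, hQ, ContinuousLinearMap.sub_comp, ContinuousLinearMap.id_comp]
      abel
    convert hd using 1
    simp only [F, hPL, ContinuousLinearMap.mul_apply, ContinuousLinearMap.neg_apply,
      ContinuousLinearMap.sub_apply, ContinuousLinearMap.coe_sub', Pi.sub_apply, map_sub]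
    abel
  have hInt : IntervalIntegrable F MeasureTheory.volume 0 t := hFcont.intervalIntegrable 0 t
  -- Duhamel formula
  have duhamel : NormedSpace.exp (t • M) b
      = NormedSpace.exp (t • L) b - ∫ s in (0:ℝ)..t, F s := by
    have h3 := intervalIntegral.integral_eq_sub_of_hasDerivAt
      (f := fun u : ℝ => NormedSpace.exp ((t - u) • L) (NormedSpace.exp (u • M) b))
      (f' := fun s => -(F s)) (fun s _ => key s) hInt.neg
    rw [intervalIntegral.integral_neg] at h3
    simp only [sub_self, sub_zero, zero_smul, NormedSpace.exp_zero,
      ContinuousLinearMap.one_apply] at h3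
    have h4 : (∫ s in (0:ℝ)..t, F s)
        = NormedSpace.exp (t • L) b - NormedSpace.exp (t • M) b := by
      rw [← neg_neg (∫ s in (0:ℝ)..t, F s), h3, neg_sub]
    rw [h4]; abel
  -- pointwise identity for the integrand after applying ⟪h l, L ·⟫
  have hpoint : ∀ s : ℝ, ⟪h l, L (F s)⟫ = ∑ j, g l j (t - s) * K j s := by
    intro s
    have hPLx : (P.comp L) (NormedSpace.exp (s • M) b) = ∑ j, K j s • h j := by
      rw [ContinuousLinearMap.comp_apply, hP]
      exact Finset.sum_congr rfl fun j _ => by rw [hK]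
    rw [hF]
    simp only [hPLx, map_sum, map_smul, inner_sum, inner_smul_right]
    refine Finset.sum_congr rfl fun j _ => ?_
    rw [hcomm L (t - s) (h j), ← hg, mul_comm]
  -- integrability of each summand
  have hsInt : ∀ j : Fin J, IntervalIntegrable (fun s => g l j (t - s) * K j s)
      MeasureTheory.volume 0 t := by
    intro j
    apply Continuous.intervalIntegrable
    apply Continuous.mul
    · have : Continuous fun s : ℝ => ⟪h l, NormedSpace.exp ((t - s) • L) (L (h j))⟫ :=
        (continuous_const.inner ((NormedSpace.exp_continuous.comp
          ((continuous_const.sub continuous_id).smul continuous_const)).clm_apply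
          continuous_const))
      exact this.congr fun s => (hg l j (t - s)).symm
    · have : Continuous fun s : ℝ => ⟪h j, L (NormedSpace.exp (s • M) b)⟫ :=
        continuous_const.inner (L.continuous.comp (hcont M b))
      exact this.congr fun s => (hK j s).symm
  -- put it all together
  rw [hK, duhamel, map_sub, inner_sub_right, hcomm L t b, ← hf]
  congr 1
  have hLi : L (∫ s in (0:ℝ)..t, F s) = ∫ s in (0:ℝ)..t, L (F s) :=
    (L.intervalIntegral_comp_comm hInt).symm
  have hLint : IntervalIntegrable (fun s => L (F s)) MeasureTheory.volume 0 t :=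
    (L.continuous.comp hFcont).intervalIntegrable 0 t
  rw [hLi]
  have h5 : ⟪h l, ∫ s in (0:ℝ)..t, L (F s)⟫ = ∫ s in (0:ℝ)..t, ⟪h l, L (F s)⟫ :=
    ((innerSL ℝ (h l)).intervalIntegral_comp_comm hLint).symm
  rw [h5]
  have h6 : (∫ s in (0:ℝ)..t, ⟪h l, L (F s)⟫)
      = ∫ s in (0:ℝ)..t, ∑ j, g l j (t - s) * K j s :=
    intervalIntegral.integral_congr fun s _ => hpoint s
  rw [h6, intervalIntegral.integral_finset_sum (fun j _ => hsInt j)]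
end
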